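/- Supermartingale-type inequality for arbitrary stopping rules: with the recursively defined control limits l_n, for any stopping time T adapted to the filtration (i.e., {T > m} ∈ F_m) with values in {1,...,N+1}, and for every 0 ≤ n ≤ N, E( ∑_{m=n+1}^{N} 1{T > m}·(c·v_{m+1} - Y_m) | F_n ) ≤ (l_n - c·v_{n+1}) · 1{T > n} almost surely. -/

import Mathlib

open MeasureTheory Finset

/-- Supermartingale-type inequality for arbitrary stopping rules: with the
recursively defined control limits `l_n`, for any stopping time `T` (i.e. `{T > m} ∈ F_m`)
with values in `{1,...,N+1}`, and every `0 ≤ n ≤ N`,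
`E(∑_{m=n+1}^{N} 1{T > m}·(c·v_{m+1} - Y_m) | F_n) ≤ (l_n - c·v_{n+1})·1{T > n}` a.s. -/
theorem stopping_rule_supermartingale_inequality
    {Ω : Type*} {m0 : MeasurableSpace Ω} (μ : Measure Ω) [IsProbabilityMeasure μ]
    (N : ℕ) (ℱ : ℕ → MeasurableSpace Ω) (hmono : Monotone ℱ) (hle : ∀ n, ℱ n ≤ m0)
    (Y v : ℕ → Ω → ℝ)
    (hYnn : ∀ n ω, 0 ≤ Y n ω) (hYint : ∀ n, Integrable (Y n) μ)
    (hYmeas : ∀ n, Measurable[ℱ n] (Y n))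
    (hvnn : ∀ n ω, 0 ≤ v n ω) (hvint : ∀ n, Integrable (v n) μ)
    (hvmeas : ∀ k, Measurable[ℱ (k - 1)] (v k))
    (c : ℝ) (hc : 0 < c) (l : ℕ → Ω → ℝ)
    (hlN1 : l (N + 1) = fun _ => 0)
    (hlN : l N = fun ω => c * v (N + 1) ω)
    (hlrec : ∀ n < N, l n =ᵐ[μ] fun ω =>
      c * v (n + 1) ω + (μ[fun ω' => max (l (n + 1) ω' - Y (n + 1) ω') 0 | ℱ n]) ω)
    (T : Ω → ℕ)
    (hTstop : ∀ m, MeasurableSet[ℱ m] {ω | m < T ω})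
    (hT : ∀ ω, 1 ≤ T ω ∧ T ω ≤ N + 1) :
    ∀ n ≤ N,
      (μ[fun ω => ∑ m ∈ Finset.Icc (n + 1) N,
          (if m < T ω then (1 : ℝ) else 0) * (c * v (m + 1) ω - Y m ω) | ℱ n])
        ≤ᵐ[μ] fun ω => (l n ω - c * v (n + 1) ω) * (if n < T ω then (1 : ℝ) else 0) := by
  -- indicator of {m < T} is measurable (in m0)
  have hindmeas : ∀ m : ℕ, Measurable fun ω => (if m < T ω then (1 : ℝ) else 0) := fun m =>
    Measurable.ite (hle m _ (hTstop m)) measurable_const measurable_const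
  -- each term of the sum is integrable
  have hterm_int : ∀ m : ℕ,
      Integrable (fun ω => (if m < T ω then (1 : ℝ) else 0) * (c * v (m + 1) ω - Y m ω)) μ := by
    intro m
    refine Integrable.bdd_mul (((hvint (m + 1)).const_mul c).sub (hYint m))
      (hindmeas m).aestronglyMeasurable (c := 1) (ae_of_all _ fun ω => ?_)
    by_cases h : m < T ω <;> simp [h]
  have hsum_int : ∀ a b : ℕ,
      Integrable (fun ω => ∑ m ∈ Finset.Icc a b,
        (if m < T ω then (1 : ℝ) else 0) * (c * v (m + 1) ω - Y m ω)) μ := fun a b =>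
    integrable_finset_sum _ fun m _ => hterm_int m
  -- integrability of the control limits
  have hlint : ∀ n, n ≤ N + 1 → Integrable (l n) μ := by
    intro n hn
    rcases lt_trichotomy n N with h | h | h
    · exact (Integrable.congr (((hvint (n + 1)).const_mul c).add integrable_condExp)
        (hlrec n h).symm)
    · rw [h, hlN]; exact (hvint (N + 1)).const_mul c
    · have : n = N + 1 := by omega
      rw [this, hlN1]; exact integrable_const 0
  -- integrability of the positive parts
  have hmax_int : ∀ n, n ≤ N →
      Integrable (fun ω => max (l (n + 1) ω - Y (n + 1) ω) 0) μ := fun n hn =>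
    ((hlint (n + 1) (by omega)).sub (hYint (n + 1))).pos_part
  suffices H : ∀ k n, n + k = N →
      (μ[fun ω => ∑ m ∈ Finset.Icc (n + 1) N,
          (if m < T ω then (1 : ℝ) else 0) * (c * v (m + 1) ω - Y m ω) | ℱ n])
        ≤ᵐ[μ] fun ω => (l n ω - c * v (n + 1) ω) * (if n < T ω then (1 : ℝ) else 0) by
    intro n hn; exact H (N - n) n (by omega)
  intro k
  induction k with
  | zero =>
    intro n hn
    have hnN : n = N := by omega
    have h1 : (fun ω => ∑ m ∈ Finset.Icc (n + 1) N,
        (if m < T ω then (1 : ℝ) else 0) * (c * v (m + 1) ω - Y m ω)) = (0 : Ω → ℝ) := by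
      funext ω; rw [Finset.Icc_eq_empty (by omega)]; simp
    rw [h1, condExp_zero]
    refine Filter.Eventually.of_forall fun ω => ?_
    simp [hnN, hlN]
  | succ k ih =>
    intro n hn
    have hnN : n < N := by omega
    have ih' := ih (n + 1) (by omega)
    -- split the sum
    have hins : Finset.Icc (n + 1) N = insert (n + 1) (Finset.Icc (n + 2) N) := by
      ext x; simp only [Finset.mem_Icc, Finset.mem_insert]; omega
    have hnotmem : (n + 1) ∉ Finset.Icc (n + 2) N := by simp
    have hsplit : (fun ω => ∑ m ∈ Finset.Icc (n + 1) N,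
        (if m < T ω then (1 : ℝ) else 0) * (c * v (m + 1) ω - Y m ω))
        = (fun ω => (if n + 1 < T ω then (1 : ℝ) else 0) * (c * v (n + 2) ω - Y (n + 1) ω))
          + (fun ω => ∑ m ∈ Finset.Icc (n + 2) N,
            (if m < T ω then (1 : ℝ) else 0) * (c * v (m + 1) ω - Y m ω)) := by
      funext ω; rw [hins, Finset.sum_insert hnotmem]; rfl
    -- the (n+1)-term is ℱ(n+1)-measurable
    have hterm_meas : StronglyMeasurable[ℱ (n + 1)]
        (fun ω => (if n + 1 < T ω then (1 : ℝ) else 0) * (c * v (n + 2) ω - Y (n + 1) ω)) := by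
      refine Measurable.stronglyMeasurable ?_
      exact (Measurable.ite (hTstop (n + 1)) measurable_const measurable_const).mul
        (((hvmeas (n + 2)).const_mul c).sub (hYmeas (n + 1)))
    -- conditional expectation at level n+1
    have hcF : μ[fun ω => ∑ m ∈ Finset.Icc (n + 1) N,
        (if m < T ω then (1 : ℝ) else 0) * (c * v (m + 1) ω - Y m ω) | ℱ (n + 1)]
        ≤ᵐ[μ] fun ω =>
          (if n < T ω then (1 : ℝ) else 0) * max (l (n + 1) ω - Y (n + 1) ω) 0 := by
      rw [hsplit]
      have h1 := condExp_add (m := ℱ (n + 1)) (μ := μ) (hterm_int (n + 1))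
        (hsum_int (n + 2) N)
      have h2 : μ[fun ω => (if n + 1 < T ω then (1 : ℝ) else 0) *
          (c * v (n + 2) ω - Y (n + 1) ω) | ℱ (n + 1)]
          = fun ω => (if n + 1 < T ω then (1 : ℝ) else 0) * (c * v (n + 2) ω - Y (n + 1) ω) :=
        condExp_of_stronglyMeasurable (hle (n + 1)) hterm_meas (hterm_int (n + 1))
      filter_upwards [h1, ih'] with ω h1ω h2ω
      rw [h1ω]
      simp only [Pi.add_apply, h2]
      by_cases hT1 : n + 1 < T ω
      · have hT0 : n < T ω := by omega
        simp only [hT1, if_true, one_mul]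
        calc c * v (n + 2) ω - Y (n + 1) ω + (μ[fun ω => ∑ m ∈ Finset.Icc (n + 2) N,
              (if m < T ω then (1 : ℝ) else 0) * (c * v (m + 1) ω - Y m ω) | ℱ (n + 1)]) ω
            ≤ c * v (n + 2) ω - Y (n + 1) ω +
              (l (n + 1) ω - c * v (n + 2) ω) * (if n + 1 < T ω then (1 : ℝ) else 0) := by
              exact add_le_add_right h2ω _
          _ = l (n + 1) ω - Y (n + 1) ω := by rw [if_pos hT1, mul_one]; ring
          _ ≤ (if n < T ω then (1 : ℝ) else 0) * max (l (n + 1) ω - Y (n + 1) ω) 0 := by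
              simp [hT0, le_max_left]
      · simp only [hT1, if_false, zero_mul, zero_add]
        calc (μ[fun ω => ∑ m ∈ Finset.Icc (n + 2) N,
              (if m < T ω then (1 : ℝ) else 0) * (c * v (m + 1) ω - Y m ω) | ℱ (n + 1)]) ω
            ≤ (l (n + 1) ω - c * v (n + 2) ω) * (if n + 1 < T ω then (1 : ℝ) else 0) := h2ω
          _ = 0 := by simp [hT1]
          _ ≤ (if n < T ω then (1 : ℝ) else 0) * max (l (n + 1) ω - Y (n + 1) ω) 0 := by
              positivity
    -- tower property
    have htower : μ[fun ω => ∑ m ∈ Finset.Icc (n + 1) N,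
        (if m < T ω then (1 : ℝ) else 0) * (c * v (m + 1) ω - Y m ω) | ℱ n]
        =ᵐ[μ] μ[μ[fun ω => ∑ m ∈ Finset.Icc (n + 1) N,
          (if m < T ω then (1 : ℝ) else 0) * (c * v (m + 1) ω - Y m ω) | ℱ (n + 1)] | ℱ n] :=
      (condExp_condExp_of_le (hmono (Nat.le_succ n)) (hle (n + 1))).symm
    -- bound inside the inner condexp and pull out the indicator
    have hind_int : Integrable (fun ω =>
        (if n < T ω then (1 : ℝ) else 0) * max (l (n + 1) ω - Y (n + 1) ω) 0) μ := by
      refine Integrable.bdd_mul (hmax_int n (by omega))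
        (hindmeas n).aestronglyMeasurable (c := 1) (ae_of_all _ fun ω => ?_)
      by_cases h : n < T ω <;> simp [h]
    have hB : μ[μ[fun ω => ∑ m ∈ Finset.Icc (n + 1) N,
        (if m < T ω then (1 : ℝ) else 0) * (c * v (m + 1) ω - Y m ω) | ℱ (n + 1)] | ℱ n]
        ≤ᵐ[μ] μ[fun ω =>
          (if n < T ω then (1 : ℝ) else 0) * max (l (n + 1) ω - Y (n + 1) ω) 0 | ℱ n] :=
      condExp_mono integrable_condExp hind_int hcF
    have hC : μ[fun ω =>
        (if n < T ω then (1 : ℝ) else 0) * max (l (n + 1) ω - Y (n + 1) ω) 0 | ℱ n]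
        =ᵐ[μ] fun ω => (if n < T ω then (1 : ℝ) else 0) *
          (μ[fun ω' => max (l (n + 1) ω' - Y (n + 1) ω') 0 | ℱ n]) ω := by
      exact condExp_mul_of_stronglyMeasurable_left
        (Measurable.stronglyMeasurable
          (Measurable.ite (hTstop n) measurable_const measurable_const))
        hind_int (hmax_int n (by omega))
    have hD : (fun ω => (if n < T ω then (1 : ℝ) else 0) *
          (μ[fun ω' => max (l (n + 1) ω' - Y (n + 1) ω') 0 | ℱ n]) ω)
        =ᵐ[μ] fun ω => (l n ω - c * v (n + 1) ω) * (if n < T ω then (1 : ℝ) else 0) := by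
      filter_upwards [hlrec n hnN] with ω hω
      rw [mul_comm]
      congr 1
      rw [hω]; ring
    calc μ[fun ω => ∑ m ∈ Finset.Icc (n + 1) N,
          (if m < T ω then (1 : ℝ) else 0) * (c * v (m + 1) ω - Y m ω) | ℱ n]
        =ᵐ[μ] _ := htower
      _ ≤ᵐ[μ] _ := hB
      _ =ᵐ[μ] _ := hC
      _ =ᵐ[μ] fun ω => (l n ω - c * v (n + 1) ω) * (if n < T ω then (1 : ℝ) else 0) := hD
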